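/- arXiv:2011.12780 — 4 statements merged into one kernel-verified Lean document; each statement's English description precedes it below -/
import Mathlib

section
/- Let b > 0, γ ≥ 0, k ≥ 1 an integer, and let φ : [0,T] → [0,∞) be absolutely continuous with φ'(t) ≤ -b·φ(t)^k + γ^k for almost every t ∈ [0,T]. Then for all t ∈ [0,T], φ(t) ≤ φ(0) + (2/b)^{1/k} · γ. -/
open MeasureTheory

/-- If φ : [0,T] → [0,∞) is absolutely continuous with
φ'(t) ≤ -b·φ(t)^k + γ^k a.e., then φ(t) ≤ φ(0) + (2/b)^{1/k}·γ. -/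
theorem stmt_3 (T b γ : ℝ) (k : ℕ) (hT : 0 < T) (hb : 0 < b) (hγ : 0 ≤ γ) (hk : 1 ≤ k)
    (φ φ' : ℝ → ℝ)
    (hpos : ∀ t ∈ Set.Icc (0:ℝ) T, 0 ≤ φ t)
    (hint : IntervalIntegrable φ' volume 0 T)
    (hderiv : ∀ᵐ t ∂(volume.restrict (Set.Ioc (0:ℝ) T)),
      HasDerivAt φ (φ' t) t ∧ φ' t ≤ -b * φ t ^ k + γ ^ k)
    (hftc : ∀ t ∈ Set.Icc (0:ℝ) T, φ t - φ 0 = ∫ s in (0:ℝ)..t, φ' s) :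
    ∀ t ∈ Set.Icc (0:ℝ) T, φ t ≤ φ 0 + (2 / b) ^ ((1:ℝ)/k) * γ := by
  intro t ht
  set c : ℝ := (2 / b) ^ ((1:ℝ)/k) with hc
  have hc0 : 0 < c := Real.rpow_pos_of_pos (by positivity) _
  have hkR : (k : ℝ) ≠ 0 := Nat.cast_ne_zero.mpr (by omega)
  have hck : c ^ k = 2 / b := by
    rw [hc, ← Real.rpow_natCast ((2/b : ℝ) ^ ((1:ℝ)/k)) k, ← Real.rpow_mul (by positivity),
      one_div, inv_mul_cancel₀ hkR, Real.rpow_one]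
  set M : ℝ := φ 0 + c * γ with hM
  have hφ0 : 0 ≤ φ 0 := hpos 0 ⟨le_rfl, hT.le⟩
  have hMγ : c * γ ≤ M := by simp [hM]; positivity
  show φ t ≤ M
  by_contra hlt
  push_neg at hlt
  have ht0 : 0 < t := by
    rcases lt_or_eq_of_le ht.1 with h | h
    · exact h
    · exfalso; rw [← h] at hlt; nlinarith
  -- continuity of φ on [0, T]
  have hcont : ContinuousOn φ (Set.Icc 0 T) := by
    have h1 : ContinuousOn (fun x => φ 0 + ∫ s in (0:ℝ)..x, φ' s) (Set.Icc 0 T) := by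
      have := intervalIntegral.continuousOn_primitive_interval' hint
        (Set.left_mem_uIcc (a := (0:ℝ)) (b := T))
      rw [Set.uIcc_of_le hT.le] at this
      exact continuousOn_const.add this
    refine h1.congr fun u hu => ?_
    have := hftc u hu
    linarith
  -- the last time φ ≤ M before t
  set S : Set ℝ := Set.Icc 0 t ∩ φ ⁻¹' (Set.Iic M) with hS
  have hIcc_sub : Set.Icc (0:ℝ) t ⊆ Set.Icc 0 T := Set.Icc_subset_Icc le_rfl ht.2
  have hScomp : IsCompact S := by
    refine IsCompact.of_isClosed_subset isCompact_Icc ?_ Set.inter_subset_left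
    exact (hcont.mono hIcc_sub).preimage_isClosed_of_isClosed isClosed_Icc isClosed_Iic
  have hSne : S.Nonempty := ⟨0, ⟨le_rfl, ht0.le⟩, by simp only [Set.mem_preimage, Set.mem_Iic, hM]; nlinarith⟩
  set s : ℝ := sSup S with hs_def
  have hsS : s ∈ S := hScomp.sSup_mem hSne
  have hs0 : 0 ≤ s := hsS.1.1
  have hsle : s ≤ t := hsS.1.2
  have hφs : φ s ≤ M := hsS.2
  have hst : s < t := lt_of_le_of_ne hsle (by intro h; rw [h] at hφs; exact absurd hφs (not_le.mpr hlt))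
  have hgt : ∀ u ∈ Set.Ioc s t, M < φ u := by
    intro u hu
    by_contra hle
    push_neg at hle
    have : u ∈ S := ⟨⟨hs0.trans hu.1.le, hu.2⟩, hle⟩
    exact absurd (le_csSup hScomp.bddAbove this) (not_le.mpr hu.1)
  -- FTC on [s, t]
  have hint1 : IntervalIntegrable φ' volume 0 s :=
    hint.mono_set (Set.uIcc_subset_uIcc (Set.left_mem_uIcc)
      (by rw [Set.uIcc_of_le hT.le]; exact ⟨hs0, hsle.trans ht.2⟩))
  have hint2 : IntervalIntegrable φ' volume s t :=
    hint.mono_set (Set.uIcc_subset_uIcc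
      (by rw [Set.uIcc_of_le hT.le]; exact ⟨hs0, hsle.trans ht.2⟩)
      (by rw [Set.uIcc_of_le hT.le]; exact ⟨ht0.le, ht.2⟩))
  have hadd := intervalIntegral.integral_add_adjacent_intervals hint1 hint2
  have key : φ t - φ s = ∫ u in s..t, φ' u := by
    have h1 := hftc t ht
    have h2 := hftc s ⟨hs0, hsle.trans ht.2⟩
    rw [← hadd] at h1
    linarith
  -- the integral is nonpositive
  have hae : ∀ᵐ u ∂(volume.restrict (Set.Ioc s t)),
      HasDerivAt φ (φ' u) u ∧ φ' u ≤ -b * φ u ^ k + γ ^ k :=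
    ae_restrict_of_ae_restrict_of_subset (Set.Ioc_subset_Ioc hs0 ht.2) hderiv
  have hmem : ∀ᵐ u ∂(volume.restrict (Set.Ioc s t)), u ∈ Set.Ioc s t :=
    ae_restrict_mem measurableSet_Ioc
  have hnonpos : ∫ u in s..t, φ' u ≤ 0 := by
    rw [intervalIntegral.integral_of_le hst.le]
    refine integral_nonpos_of_ae ?_
    filter_upwards [hae, hmem] with u hu hmu
    have hMu : M < φ u := hgt u hmu
    have hcγ : c * γ ≤ φ u := le_trans hMγ hMu.le
    have hpow : (c * γ) ^ k ≤ φ u ^ k := pow_le_pow_left₀ (by positivity) hcγ k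
    have h2 : (2 / b) * γ ^ k ≤ φ u ^ k := by
      rw [mul_pow, hck] at hpow; exact hpow
    have h3 : -b * φ u ^ k ≤ -2 * γ ^ k := by
      have := mul_le_mul_of_nonneg_left h2 hb.le
      rw [mul_comm b (2 / b * γ ^ k)] at this
      have hbb : 2 / b * γ ^ k * b = 2 * γ ^ k := by field_simp
      nlinarith
    have := hu.2
    have hγk : 0 ≤ γ ^ k := by positivity
    simp only [Pi.zero_apply]
    linarith
  nlinarith [key]
end

section
/- Let f : ℝ → ℝ be a polynomial of odd degree 2k+1 of the form f(η) = -a·η^{2k+1} + Σ_{l=0}^{2k} a_l·η^l with a ≥ c > 0 and |a_l| ≤ C for all l. Then there exists a constant a' ≥ 0, depending only on c, C, and k, such that f(η + ζ)·sgn(η) ≤ a'·(1 + |ζ|^{2k+1}) for all η, ζ ∈ ℝ. -/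
/-- Auxiliary: the η > 0 case with an explicit constant. -/
lemma stmt_5_aux (k : ℕ) (c C : ℝ) (hc : 0 < c) (hcC : c ≤ C)
    (a : ℝ) (acoef : ℕ → ℝ) (hca : c ≤ a) (haC : a ≤ C)
    (hcoef : ∀ l ≤ 2*k, |acoef l| ≤ C) (η ζ : ℝ) (hη : 0 < η) :
    -(a * (η + ζ) ^ (2*k+1)) + ∑ l ∈ Finset.range (2*k+1), acoef l * (η + ζ) ^ l
      ≤ (C * (2*k+1) * (1 + (1 + C * (2*k+1) * 2^(2*k) / c))^(2*k) + C + c)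
          * (1 + |ζ| ^ (2*k+1)) := by
  have hC : (0:ℝ) < C := lt_of_lt_of_le hc hcC
  set M : ℝ := 1 + C * (2*k+1) * 2^(2*k) / c with hM
  set A : ℝ := C * (2*k+1) * (1 + M)^(2*k) with hA
  have hM1 : (1:ℝ) ≤ M := by
    rw [hM]
    have : (0:ℝ) ≤ C * (2*k+1) * 2^(2*k) / c := by positivity
    linarith
  have hA0 : (0:ℝ) ≤ A := by positivity
  set x : ℝ := η + ζ with hx
  -- bound the lower order part
  have hp : |∑ l ∈ Finset.range (2*k+1), acoef l * x ^ l|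
      ≤ C * (2*k+1) * (1 + |x|)^(2*k) := by
    have h1 : |∑ l ∈ Finset.range (2*k+1), acoef l * x ^ l|
        ≤ ∑ l ∈ Finset.range (2*k+1), |acoef l * x ^ l| :=
      Finset.abs_sum_le_sum_abs _ _
    have h2 : ∑ l ∈ Finset.range (2*k+1), |acoef l * x ^ l|
        ≤ ∑ l ∈ Finset.range (2*k+1), C * (1 + |x|)^(2*k) := by
      apply Finset.sum_le_sum
      intro l hl
      have hl' : l ≤ 2*k := Nat.lt_succ_iff.mp (Finset.mem_range.mp hl)
      rw [abs_mul, abs_pow]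
      have hx1 : |x| ≤ 1 + |x| := by linarith [abs_nonneg x]
      have hxl : |x|^l ≤ (1 + |x|)^(2*k) := by
        calc |x|^l ≤ (1 + |x|)^l := pow_le_pow_left₀ (abs_nonneg x) hx1 l
          _ ≤ (1 + |x|)^(2*k) :=
            pow_le_pow_right₀ (by linarith [abs_nonneg x]) hl'
      exact mul_le_mul (hcoef l hl') hxl (by positivity) hC.le
    have h3 : ∑ l ∈ Finset.range (2*k+1), C * (1 + |x|)^(2*k)
        = C * (2*k+1) * (1 + |x|)^(2*k) := by
      rw [Finset.sum_const, Finset.card_range]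
      push_cast
      ring
    linarith
  -- bound on the leading term
  have hkey : -(a * x^(2*k+1)) ≤ -(c * |x|^(2*k+1)) + (C + c) * |ζ|^(2*k+1) := by
    rcases le_or_gt 0 x with hx0 | hx0
    · have habs : |x| = x := abs_of_nonneg hx0
      have hpow : 0 ≤ x^(2*k+1) := pow_nonneg hx0 _
      have hZ : (0:ℝ) ≤ |ζ|^(2*k+1) := pow_nonneg (abs_nonneg _) _
      rw [habs]
      nlinarith
    · -- x < 0, so |x| ≤ |ζ| since x = η + ζ > ζ
      have hxζ : ζ < x := by simp only [hx]; linarith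
      have habs : |x| = -x := abs_of_neg hx0
      have hxle : |x| ≤ |ζ| := by
        rw [habs]
        calc -x ≤ -ζ := by linarith
          _ ≤ |ζ| := neg_le_abs ζ
      have hodd : x^(2*k+1) = -(|x|^(2*k+1)) := by
        rw [habs, Odd.neg_pow ⟨k, by ring⟩, neg_neg]
      have h1 : |x|^(2*k+1) ≤ |ζ|^(2*k+1) :=
        pow_le_pow_left₀ (abs_nonneg x) hxle _
      rw [hodd]
      nlinarith [pow_nonneg (abs_nonneg x) (2*k+1)]
  -- bound -c t^{2k+1} + C(2k+1)(1+t)^{2k} ≤ A for t ≥ 0, at t = |x|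
  have hh : -(c * |x|^(2*k+1)) + C * (2*k+1) * (1 + |x|)^(2*k) ≤ A := by
    set t : ℝ := |x| with ht
    have ht0 : 0 ≤ t := abs_nonneg x
    rcases le_total t M with h | h
    · have h1 : (1 + t)^(2*k) ≤ (1 + M)^(2*k) :=
        pow_le_pow_left₀ (by linarith) (by linarith) _
      have h2 : 0 ≤ c * t^(2*k+1) := by positivity
      have h3 : C * (2*k+1) * (1 + t)^(2*k) ≤ C * (2*k+1) * (1 + M)^(2*k) := by
        apply mul_le_mul_of_nonneg_left h1
        positivity
      linarith
    · have ht1 : (1:ℝ) ≤ t := le_trans hM1 h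
      have h1 : (1 + t)^(2*k) ≤ 2^(2*k) * t^(2*k) := by
        calc (1 + t)^(2*k) ≤ (2*t)^(2*k) :=
            pow_le_pow_left₀ (by linarith) (by linarith) _
          _ = 2^(2*k) * t^(2*k) := mul_pow 2 t (2*k)
      have hcM : c * M = c + C * (2*k+1) * 2^(2*k) := by
        rw [hM, mul_add, mul_one, mul_div_cancel₀ _ hc.ne']
      have h2 : C * (2*k+1) * 2^(2*k) ≤ c * t := by
        have := mul_le_mul_of_nonneg_left h hc.le
        nlinarith
      have h3 : c * t^(2*k+1) = (c * t) * t^(2*k) := by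
        rw [pow_succ]; ring
      have htk : (0:ℝ) ≤ t^(2*k) := pow_nonneg ht0 _
      have h4 : C * (2*k+1) * (1 + t)^(2*k) ≤ c * t^(2*k+1) := by
        calc C * (2*k+1) * (1 + t)^(2*k)
            ≤ C * (2*k+1) * (2^(2*k) * t^(2*k)) := by
              apply mul_le_mul_of_nonneg_left h1; positivity
          _ = (C * (2*k+1) * 2^(2*k)) * t^(2*k) := by ring
          _ ≤ (c * t) * t^(2*k) := mul_le_mul_of_nonneg_right h2 htk
          _ = c * t^(2*k+1) := h3.symm
      linarith
  -- combine
  have hZ : (0:ℝ) ≤ |ζ|^(2*k+1) := pow_nonneg (abs_nonneg _) _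
  have hsum := (abs_le.mp hp).2
  have hAZ : 0 ≤ A * |ζ|^(2*k+1) := mul_nonneg hA0 hZ
  nlinarith

/-- For odd-degree polynomials f(η) = -a η^{2k+1} + Σ_{l≤2k} a_l η^l with
c ≤ a ≤ C and |a_l| ≤ C, there is a constant a' ≥ 0 depending only on c, C, k with
f(η+ζ)·sgn η ≤ a'(1+|ζ|^{2k+1}) for all η, ζ. -/
theorem stmt_5 (k : ℕ) (c C : ℝ) (hc : 0 < c) (hcC : c ≤ C) :
    ∃ a' : ℝ, 0 ≤ a' ∧
      ∀ (a : ℝ) (acoef : ℕ → ℝ), c ≤ a → a ≤ C → (∀ l ≤ 2*k, |acoef l| ≤ C) →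
        ∀ η ζ : ℝ,
          (-(a * (η + ζ) ^ (2*k+1)) + ∑ l ∈ Finset.range (2*k+1), acoef l * (η + ζ) ^ l)
              * Real.sign η ≤ a' * (1 + |ζ| ^ (2*k+1)) := by
  have hC : (0:ℝ) < C := lt_of_lt_of_le hc hcC
  refine ⟨C * (2*k+1) * (1 + (1 + C * (2*k+1) * 2^(2*k) / c))^(2*k) + C + c,
    by positivity, ?_⟩
  intro a acoef hca haC hcoef η ζ
  rcases lt_trichotomy η 0 with hη | hη | hη
  · rw [Real.sign_of_neg hη]
    -- reflect: apply aux at (-η, -ζ) with coefficients l ↦ (-1)^(l+1) * acoef l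
    have hcoef' : ∀ l ≤ 2*k, |(fun l => (-1:ℝ)^(l+1) * acoef l) l| ≤ C := by
      intro l hl
      simp only [abs_mul, abs_pow, abs_neg, abs_one, one_pow, one_mul]
      exact hcoef l hl
    have haux := stmt_5_aux k c C hc hcC a (fun l => (-1:ℝ)^(l+1) * acoef l)
      hca haC hcoef' (-η) (-ζ) (by linarith)
    have hxeq : -η + -ζ = -(η + ζ) := by ring
    rw [hxeq] at haux
    have hlead : -(a * (-(η+ζ))^(2*k+1)) = a * (η+ζ)^(2*k+1) := by
      rw [Odd.neg_pow ⟨k, by ring⟩]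
      ring
    have hsumeq : ∑ l ∈ Finset.range (2*k+1),
        (fun l => (-1:ℝ)^(l+1) * acoef l) l * (-(η+ζ))^l
        = -∑ l ∈ Finset.range (2*k+1), acoef l * (η+ζ)^l := by
      rw [← Finset.sum_neg_distrib]
      apply Finset.sum_congr rfl
      intro l _
      rw [neg_pow]
      ring_nf
      rw [mul_comm l 2, pow_mul]
      norm_num
    rw [hlead, hsumeq, abs_neg] at haux
    nlinarith [haux]
  · rw [hη, Real.sign_zero, mul_zero]
    positivity
  · rw [Real.sign_of_pos hη, mul_one]
    exact stmt_5_aux k c C hc hcC a acoef hca haC hcoef η ζ hη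
end

section
/- Let f : ℝ → ℝ be a polynomial of the form f(η) = -a·η^{2k+1} + Σ_{l=0}^{2k} a_l·η^l with a ≥ c > 0 and |a_l| ≤ C. Then there exist positive constants A, B, D, depending only on c, C, k, such that for all η, ζ ∈ ℝ: (f(η+ζ) - f(ζ))·sgn(η) ≤ A - B·|η|^{2k+1} + D·|ζ|^{2k+1}. -/
set_option maxHeartbeats 1000000

-- helper: t^l ≤ 1 + t^m for 0 ≤ t, l ≤ m
private lemma aux_pow_le (t : ℝ) (ht : 0 ≤ t) {l m : ℕ} (hlm : l ≤ m) :
    t ^ l ≤ 1 + t ^ m := by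
  rcases le_total t 1 with h | h
  · have h1 : t ^ l ≤ 1 := pow_le_one₀ ht h
    nlinarith [pow_nonneg ht m]
  · have := pow_le_pow_right₀ h hlm
    nlinarith

-- helper: t^m ≤ δ t^(m+1) + (1/δ)^m for 0 ≤ t, 0 < δ
private lemma aux_eps (t δ : ℝ) (ht : 0 ≤ t) (hδ : 0 < δ) (m : ℕ) :
    t ^ m ≤ δ * t ^ (m + 1) + (1 / δ) ^ m := by
  rcases le_total t (1/δ) with h | h
  · have h1 : t ^ m ≤ (1/δ) ^ m := pow_le_pow_left₀ ht h m
    nlinarith [pow_nonneg ht (m+1)]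
  · have h1 : 1 ≤ δ * t := by
      rw [div_le_iff₀ hδ] at h; linarith [mul_comm t δ]
    have h2 : t ^ m ≤ (δ * t) * t ^ m := le_mul_of_one_le_left (pow_nonneg ht m) h1
    have h3 : (δ * t) * t ^ m = δ * t ^ (m+1) := by ring
    have h4 : (0:ℝ) ≤ (1/δ) ^ m := by positivity
    linarith

/-- For f(η) = -a η^{2k+1} + Σ_{l≤2k} a_l η^l with c ≤ a ≤ C and |a_l| ≤ C, there are
positive constants A, B, D depending only on c, C, k such that
(f(η+ζ) - f(ζ))·sgn η ≤ A - B|η|^{2k+1} + D|ζ|^{2k+1}. -/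
theorem stmt_6 (k : ℕ) (c C : ℝ) (hc : 0 < c) (hcC : c ≤ C) :
    ∃ A B D : ℝ, 0 < A ∧ 0 < B ∧ 0 < D ∧
      ∀ (a : ℝ) (acoef : ℕ → ℝ), c ≤ a → a ≤ C → (∀ l ≤ 2*k, |acoef l| ≤ C) →
        ∀ η ζ : ℝ,
          ((-(a * (η + ζ) ^ (2*k+1)) + ∑ l ∈ Finset.range (2*k+1), acoef l * (η + ζ) ^ l)
            - (-(a * ζ ^ (2*k+1)) + ∑ l ∈ Finset.range (2*k+1), acoef l * ζ ^ l))
              * Real.sign η ≤ A - B * |η| ^ (2*k+1) + D * |ζ| ^ (2*k+1) := by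
  have hC : 0 < C := lt_of_lt_of_le hc hcC
  set n : ℕ := 2*k+1 with hn
  set T : ℝ := 2 ^ (2*k) with hT
  have hT0 : (0:ℝ) < T := by positivity
  have hT1 : (1:ℝ) ≤ T := one_le_pow₀ (by norm_num)
  set Cn : ℝ := C * (2*k+1) with hCn
  have hCn0 : 0 < Cn := by positivity
  set δ : ℝ := c / (2 * Cn * T^2) with hδdef
  have hδ : 0 < δ := by positivity
  set B : ℝ := c / (2*T) with hB
  have hB0 : 0 < B := by positivity
  set E : ℝ := (1/δ) ^ (2*k) with hE
  have hE0 : 0 < E := by positivity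
  set A : ℝ := 2*Cn + Cn * E + 1 with hA
  set D : ℝ := 3*c + Cn with hD
  have hBeq : Cn * (δ * T) = B := by
    rw [hB, hδdef]; field_simp
  have hBc : B ≤ c := by
    rw [hB, div_le_iff₀ (by positivity)]; nlinarith
  refine ⟨A, B, D, by positivity, hB0, by positivity, ?_⟩
  intro a acoef hca haC hcoef η ζ
  set u : ℝ := η + ζ with hu
  set x : ℝ := |η| with hx
  set z : ℝ := |ζ| with hz
  have hx0 : 0 ≤ x := abs_nonneg _
  have hz0 : 0 ≤ z := abs_nonneg _
  set X : ℝ := x ^ n with hX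
  set Z : ℝ := z ^ n with hZ
  have hX0 : 0 ≤ X := pow_nonneg hx0 _
  have hZ0 : 0 ≤ Z := pow_nonneg hz0 _
  rcases eq_or_ne η 0 with rfl | hη0
  · simp only [Real.sign_zero, mul_zero]
    have : (0:ℝ) ≤ A - B * X + D * Z := by
      have hXz : X = 0 := by rw [hX, hx]; simp [hn]
      rw [hXz]
      have hA0 : 0 < A := by positivity
      have hDZ : 0 ≤ D * Z := mul_nonneg (by positivity) hZ0
      linarith
    simpa [hx, hz, hX, hZ] using this
  -- main case η ≠ 0
  set s : ℝ := Real.sign η with hs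
  set p : ℝ := u ^ n - ζ ^ n with hp
  set q : ℝ := ∑ l ∈ Finset.range n, acoef l * (u ^ l - ζ ^ l) with hq
  have hodd : Odd n := ⟨k, by omega⟩
  -- rewrite the LHS
  have hsum : (∑ l ∈ Finset.range n, acoef l * u ^ l)
      - ∑ l ∈ Finset.range n, acoef l * ζ ^ l = q := by
    rw [hq, ← Finset.sum_sub_distrib]
    exact Finset.sum_congr rfl fun l _ => by ring
  have hexpr : ((-(a * u ^ n) + ∑ l ∈ Finset.range n, acoef l * u ^ l)
      - (-(a * ζ ^ n) + ∑ l ∈ Finset.range n, acoef l * ζ ^ l)) * s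
      = -(a * (p * s)) + q * s := by
    rw [← hsum, hp]; ring
  -- sign facts
  have hps : p * s = |p| := by
    rcases lt_or_gt_of_ne hη0 with hneg | hpos
    · have hs1 : s = -1 := Real.sign_of_neg hneg
      have hle : u ≤ ζ := by rw [hu]; linarith
      have : u ^ n ≤ ζ ^ n := (Odd.strictMono_pow hodd).monotone hle
      have hp0 : p ≤ 0 := by rw [hp]; linarith
      rw [hs1, abs_of_nonpos hp0]; ring
    · have hs1 : s = 1 := Real.sign_of_pos hpos
      have hle : ζ ≤ u := by rw [hu]; linarith
      have : ζ ^ n ≤ u ^ n := (Odd.strictMono_pow hodd).monotone hle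
      have hp0 : 0 ≤ p := by rw [hp]; linarith
      rw [hs1, abs_of_nonneg hp0]; ring
  have hqs : q * s ≤ |q| := by
    have habs : |s| = 1 := by
      rcases lt_or_gt_of_ne hη0 with hneg | hpos
      · rw [hs, Real.sign_of_neg hneg]; norm_num
      · rw [hs, Real.sign_of_pos hpos]; norm_num
    calc q * s ≤ |q * s| := le_abs_self _
      _ = |q| * |s| := abs_mul _ _
      _ = |q| := by rw [habs, mul_one]
  -- bound on the leading term
  set U : ℝ := |u| ^ n with hU
  have hU0 : 0 ≤ U := pow_nonneg (abs_nonneg _) _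
  have hplb : U - Z ≤ |p| := by
    have h1 : |u| ^ n - |ζ| ^ n ≤ |u ^ n - ζ ^ n| := by
      calc |u| ^ n - |ζ| ^ n = |u ^ n| - |ζ ^ n| := by rw [abs_pow, abs_pow]
        _ ≤ |u ^ n - ζ ^ n| := abs_sub_abs_le_abs_sub _ _
    rw [hU, hZ, hp]; exact h1
  have hXU : X ≤ T * (U + Z) := by
    have h1 : x ≤ |u| + z := by
      rw [hx, hz, hu]
      calc |η| = |(η + ζ) - ζ| := by ring_nf
        _ ≤ |η + ζ| + |ζ| := abs_sub _ _
    have h2 : x ^ n ≤ (|u| + z) ^ n := pow_le_pow_left₀ hx0 h1 n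
    have h3 : (|u| + z) ^ n ≤ 2 ^ (n-1) * (|u| ^ n + z ^ n) :=
      add_pow_le (abs_nonneg _) hz0 n
    have h4 : (2:ℝ) ^ (n-1) = T := by rw [hT, hn]; norm_num
    rw [hX, hU, hZ, hT]; rw [h4] at h3; linarith
  have hlead : -(a * (p * s)) ≤ -c * U + c * Z := by
    rw [hps]
    have h1 : c * |p| ≤ a * |p| := mul_le_mul_of_nonneg_right hca (abs_nonneg _)
    have h2 : c * (U - Z) ≤ c * |p| := mul_le_mul_of_nonneg_left hplb hc.le
    have h2' : c * U - c * Z ≤ c * |p| := by linarith [h2, (by ring : c * (U - Z) = c * U - c * Z)]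
    linarith
  have h2B : 2 * B * X ≤ c * U + c * Z := by
    calc 2 * B * X = (c/T) * X := by rw [hB]; ring
      _ ≤ (c/T) * (T * (U + Z)) := mul_le_mul_of_nonneg_left hXU (by positivity)
      _ = c * U + c * Z := by field_simp
  -- bound on q
  set W : ℝ := (x + z) ^ (2*k) with hW
  set S : ℝ := (x + z) ^ n with hS
  have hqb : |q| ≤ Cn * (2 + W + Z) := by
    have hterm : ∀ l ∈ Finset.range n, |acoef l * (u ^ l - ζ ^ l)| ≤ C * (2 + W + Z) := by
      intro l hl
      have hl' : l ≤ 2*k := by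
        have := Finset.mem_range.mp hl; omega
      have hc1 : |acoef l| ≤ C := hcoef l hl'
      have hab : |u ^ l - ζ ^ l| ≤ |u| ^ l + z ^ l := by
        calc |u ^ l - ζ ^ l| ≤ |u ^ l| + |ζ ^ l| := abs_sub _ _
          _ = |u| ^ l + z ^ l := by rw [abs_pow, abs_pow, hz]
      have hul : |u| ^ l ≤ (x + z) ^ l := by
        apply pow_le_pow_left₀ (abs_nonneg _)
        rw [hx, hz, hu]
        calc |η + ζ| ≤ |η| + |ζ| := abs_add_le _ _
          _ = x + z := by rw [hx, hz]
      have hue : (x + z) ^ l ≤ 1 + W := by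
        rw [hW]; exact aux_pow_le _ (by positivity) hl'
      have hze : z ^ l ≤ 1 + Z := by
        rw [hZ]; exact aux_pow_le _ hz0 (by omega)
      calc |acoef l * (u ^ l - ζ ^ l)| = |acoef l| * |u ^ l - ζ ^ l| := abs_mul _ _
        _ ≤ C * (|u| ^ l + z ^ l) := by
            apply mul_le_mul hc1 hab (abs_nonneg _) hC.le
        _ ≤ C * (2 + W + Z) := by
            have hsum2 : |u| ^ l + z ^ l ≤ 2 + W + Z := by linarith
            exact mul_le_mul_of_nonneg_left hsum2 hC.le
    calc |q| ≤ ∑ l ∈ Finset.range n, |acoef l * (u ^ l - ζ ^ l)| := by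
          rw [hq]; exact Finset.abs_sum_le_sum_abs _ _
      _ ≤ ∑ _l ∈ Finset.range n, C * (2 + W + Z) := Finset.sum_le_sum hterm
      _ = (n : ℝ) * (C * (2 + W + Z)) := by
          rw [Finset.sum_const, Finset.card_range, nsmul_eq_mul]
      _ = Cn * (2 + W + Z) := by rw [hCn, hn]; push_cast; ring
  have hWe : W ≤ δ * S + E := by
    rw [hW, hS, hE, hn]; exact aux_eps _ δ (by positivity) hδ (2*k)
  have hSe : S ≤ T * (X + Z) := by
    have h3 : (x + z) ^ n ≤ 2 ^ (n-1) * (x ^ n + z ^ n) := add_pow_le hx0 hz0 n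
    have h4 : (2:ℝ) ^ (n-1) = T := by rw [hT, hn]; norm_num
    rw [hS, hX, hZ]; rw [h4] at h3; exact h3
  have hCnW : Cn * W ≤ B * (X + Z) + Cn * E := by
    have h1 : W ≤ δ * (T * (X + Z)) + E := by
      have := mul_le_mul_of_nonneg_left hSe hδ.le
      linarith
    have h2 : Cn * W ≤ Cn * (δ * (T * (X + Z)) + E) :=
      mul_le_mul_of_nonneg_left h1 hCn0.le
    have h3 : Cn * (δ * (T * (X + Z)) + E) = Cn * (δ * T) * (X + Z) + Cn * E := by ring
    rw [h3, hBeq] at h2; exact h2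
  -- assemble
  have hCnZ : 0 ≤ Cn * Z := mul_nonneg hCn0.le hZ0
  have hBX : 0 ≤ B * X := mul_nonneg hB0.le hX0
  have hBZ : 0 ≤ B * Z := mul_nonneg hB0.le hZ0
  have hBcZ : B * Z ≤ c * Z := mul_le_mul_of_nonneg_right hBc hZ0
  have final : -(a * (p * s)) + q * s ≤ A - B * X + D * Z := by
    have hq2 : q * s ≤ Cn * (2 + W + Z) := le_trans hqs hqb
    have hq3 : q * s ≤ 2*Cn + Cn*W + Cn*Z := by
      have : Cn * (2 + W + Z) = 2*Cn + Cn*W + Cn*Z := by ring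
      linarith
    have hCnW' : Cn * W ≤ B*X + B*Z + Cn*E := by
      have : B * (X + Z) = B*X + B*Z := by ring
      linarith
    rw [hA, hD]
    linarith [hlead, hq3, hCnW', h2B, hBcZ, hCnZ]
  calc ((-(a * u ^ n) + ∑ l ∈ Finset.range n, acoef l * u ^ l)
      - (-(a * ζ ^ n) + ∑ l ∈ Finset.range n, acoef l * ζ ^ l)) * s
      = -(a * (p * s)) + q * s := hexpr
    _ ≤ A - B * X + D * Z := final
end

section
/- Define on the space 𝒱 = {(u, r) ∈ (H¹(0,1))^m × ℝⁿ : u is continuous across vertices and Lu = r} the form 𝔞((u,r),(g,q)) = Σ_j ∫₀¹ μ_j c_j u_j' g_j' dx + Σ_j ∫₀¹ μ_j p_j u_j g_j dx − ⟨Mr, q⟩. If M satisfies: symmetric, nonnegative off-diagonal, and strictly diagonally dominant with negative row sums (b_{ii} + Σ_{k≠i} b_{ik} < 0), and c_j > 0, p_j ≥ 0, then 𝔞 is symmetric and accretive: 𝔞(U,U) ≥ 0 for all U ∈ 𝒱, with 𝔞(U,U) = 0 only for U = 0. -/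
open MeasureTheory

/-- The sesquilinear (here: bilinear, real) form of the network problem:
𝔞((u,r),(g,q)) = Σ_j ∫₀¹ μ_j c_j u_j' g_j' + Σ_j ∫₀¹ μ_j p_j u_j g_j − ⟨Mr,q⟩. -/
noncomputable def netForm (m n : ℕ) (μ : Fin m → ℝ) (c p : Fin m → ℝ → ℝ)
    (M : Matrix (Fin n) (Fin n) ℝ)
    (u : Fin m → ℝ → ℝ) (u' : Fin m → ℝ → ℝ) (r : Fin n → ℝ)
    (g : Fin m → ℝ → ℝ) (g' : Fin m → ℝ → ℝ) (q : Fin n → ℝ) : ℝ :=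
  (∑ j, ∫ x in (0:ℝ)..1, μ j * c j x * u' j x * g' j x)
    + (∑ j, ∫ x in (0:ℝ)..1, μ j * p j x * u j x * g j x)
    - ∑ i, (∑ l, M i l * r l) * q i

/-- Quadratic form bound for a symmetric matrix with nonnegative off-diagonal
entries: `⟨Mr, r⟩ ≤ ∑ i (row sum)_i r_i²`. -/
lemma quad_le {n : ℕ} (M : Matrix (Fin n) (Fin n) ℝ) (hMsym : M.IsSymm)
    (hMoff : ∀ i l, i ≠ l → 0 ≤ M i l) (r : Fin n → ℝ) :
    ∑ i, (∑ l, M i l * r l) * r i ≤ ∑ i, (∑ l, M i l) * r i ^ 2 := by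
  have key : ∑ i, (∑ l, M i l * r l) * r i
      ≤ ∑ i, ∑ l, M i l * ((r i) ^ 2 + (r l) ^ 2) / 2 := by
    simp_rw [Finset.sum_mul]
    apply Finset.sum_le_sum
    intro i _
    apply Finset.sum_le_sum
    intro l _
    rcases eq_or_ne i l with h | h
    · subst h; ring_nf; rfl
    · have h1 : 0 ≤ M i l := hMoff i l h
      nlinarith [sq_nonneg (r i - r l), sq_nonneg (r i + r l)]
  refine key.trans (le_of_eq ?_)
  have swap : ∑ i, ∑ l, M i l * (r l) ^ 2 = ∑ i, ∑ l, M i l * (r i) ^ 2 := by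
    rw [Finset.sum_comm]
    refine Finset.sum_congr rfl fun i _ => Finset.sum_congr rfl fun l _ => ?_
    have : M l i = M i l := by
      have := hMsym; rw [Matrix.IsSymm] at this
      calc M l i = M.transpose i l := rfl
        _ = M i l := by rw [this]
    rw [this]
  calc ∑ i, ∑ l, M i l * ((r i) ^ 2 + (r l) ^ 2) / 2
      = (∑ i, ∑ l, M i l * (r i) ^ 2) / 2 + (∑ i, ∑ l, M i l * (r l) ^ 2) / 2 := by
        rw [Finset.sum_div, Finset.sum_div, ← Finset.sum_add_distrib]
        refine Finset.sum_congr rfl fun i _ => ?_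
        rw [Finset.sum_div, Finset.sum_div, ← Finset.sum_add_distrib]
        refine Finset.sum_congr rfl fun l _ => ?_; ring
    _ = ∑ i, ∑ l, M i l * (r i) ^ 2 := by rw [swap]; ring
    _ = ∑ i, (∑ l, M i l) * r i ^ 2 := by
        refine Finset.sum_congr rfl fun i _ => ?_; rw [Finset.sum_mul]

/-- Row sums are negative under the stated dominance hypothesis. -/
lemma rowsum_neg {n : ℕ} (M : Matrix (Fin n) (Fin n) ℝ)
    (hMrow : ∀ i, M i i + ∑ l ∈ Finset.univ.filter (fun l => l ≠ i), M i l < 0)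
    (i : Fin n) : ∑ l, M i l < 0 := by
  have h := hMrow i
  have : ∑ l, M i l = M i i + ∑ l ∈ Finset.univ.filter (fun l => l ≠ i), M i l := by
    rw [← Finset.sum_filter_add_sum_filter_not Finset.univ (fun l => l ≠ i) (fun l => M i l)]
    have h1 : Finset.univ.filter (fun l => ¬l ≠ i) = {i} := by
      ext l; simp [eq_comm]
    rw [h1, Finset.sum_singleton, add_comm]
  linarith [this ▸ h]

/-- The quadratic form `⟨Mr, r⟩` is nonpositive, and zero only for `r = 0`. -/
lemma quad_nonpos {n : ℕ} (M : Matrix (Fin n) (Fin n) ℝ) (hMsym : M.IsSymm)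
    (hMoff : ∀ i l, i ≠ l → 0 ≤ M i l)
    (hMrow : ∀ i, M i i + ∑ l ∈ Finset.univ.filter (fun l => l ≠ i), M i l < 0)
    (r : Fin n → ℝ) :
    ∑ i, (∑ l, M i l * r l) * r i ≤ 0 ∧
      (∑ i, (∑ l, M i l * r l) * r i = 0 → r = 0) := by
  have hb := quad_le M hMsym hMoff r
  have hterm : ∀ i : Fin n, i ∈ Finset.univ → (∑ l, M i l) * r i ^ 2 ≤ 0 := by
    intro i _
    exact mul_nonpos_of_nonpos_of_nonneg (rowsum_neg M hMrow i).le (sq_nonneg _)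
  have hsum : ∑ i, (∑ l, M i l) * r i ^ 2 ≤ 0 := Finset.sum_nonpos hterm
  refine ⟨hb.trans hsum, fun h0 => ?_⟩
  have hzero : ∑ i, (∑ l, M i l) * r i ^ 2 = 0 := le_antisymm hsum (h0 ▸ hb)
  funext i
  have := (Finset.sum_eq_zero_iff_of_nonpos hterm).mp hzero i (Finset.mem_univ i)
  have hr : r i ^ 2 = 0 := by
    by_contra hne
    have : 0 < r i ^ 2 := lt_of_le_of_ne (sq_nonneg _) (Ne.symm hne)
    have := mul_neg_of_neg_of_pos (rowsum_neg M hMrow i) this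
    linarith
  simpa using pow_eq_zero_iff (n := 2) (by norm_num) |>.mp hr

/-- A continuous nonnegative function with vanishing integral on `[0,1]`
vanishes on `[0,1]`. -/
lemma cont_nonneg_int_zero (f : ℝ → ℝ) (hf : Continuous f) (h0 : ∀ x, 0 ≤ f x)
    (hI : ∫ x in (0:ℝ)..1, f x = 0) : ∀ x ∈ Set.Icc (0:ℝ) 1, f x = 0 := by
  have hae : f =ᵐ[volume.restrict (Set.Ioc (0:ℝ) 1)] 0 := by
    refine (intervalIntegral.integral_eq_zero_iff_of_le_of_nonneg_ae (by norm_num)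
      (Filter.Eventually.of_forall fun x => h0 x)
      (hf.intervalIntegrable 0 1)).mp hI
  have heq : Set.EqOn f 0 (Set.Ioc (0:ℝ) 1) :=
    Measure.eqOn_Ioc_of_ae_eq volume hae hf.continuousOn continuousOn_const
  have hcl : Set.EqOn f 0 (closure (Set.Ioc (0:ℝ) 1)) :=
    heq.closure hf continuous_const
  intro x hx
  have : x ∈ closure (Set.Ioc (0:ℝ) 1) := by
    rw [closure_Ioc (by norm_num : (0:ℝ) ≠ 1)]; exact hx
  simpa using hcl this

/-- The form 𝔞 on the network, with M symmetric, nonnegative off-diagonal, negative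
row sums, c_j > 0, p_j ≥ 0, is symmetric and accretive; 𝔞(U,U) = 0 only for U = 0.
Membership (u,r) ∈ 𝒱 is encoded by: u_j ∈ C¹, with endpoint values given by r at
the vertices e0 j, e1 j of the edge j (continuity across the vertices). -/
theorem stmt_13 (m n : ℕ) (e0 e1 : Fin m → Fin n)
    (μ : Fin m → ℝ) (hμ : ∀ j, 0 < μ j)
    (c p : Fin m → ℝ → ℝ)
    (hcc : ∀ j, Continuous (c j)) (hcpos : ∀ j x, 0 < c j x)
    (hpc : ∀ j, Continuous (p j)) (hppos : ∀ j x, 0 ≤ p j x)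
    (M : Matrix (Fin n) (Fin n) ℝ) (hMsym : M.IsSymm)
    (hMoff : ∀ i l, i ≠ l → 0 ≤ M i l)
    (hMrow : ∀ i, M i i + ∑ l ∈ Finset.univ.filter (fun l => l ≠ i), M i l < 0) :
    ∀ (u : Fin m → ℝ → ℝ) (u' : Fin m → ℝ → ℝ) (r : Fin n → ℝ),
      (∀ j x, HasDerivAt (u j) (u' j x) x) → (∀ j, Continuous (u' j)) →
      (∀ j, u j 0 = r (e0 j) ∧ u j 1 = r (e1 j)) →
      (∀ (g : Fin m → ℝ → ℝ) (g' : Fin m → ℝ → ℝ) (q : Fin n → ℝ),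
        (∀ j x, HasDerivAt (g j) (g' j x) x) → (∀ j, Continuous (g' j)) →
        (∀ j, g j 0 = q (e0 j) ∧ g j 1 = q (e1 j)) →
        netForm m n μ c p M u u' r g g' q = netForm m n μ c p M g g' q u u' r) ∧
      0 ≤ netForm m n μ c p M u u' r u u' r ∧
      (netForm m n μ c p M u u' r u u' r = 0 →
        (∀ j, ∀ x ∈ Set.Icc (0:ℝ) 1, u j x = 0) ∧ r = 0) := by
  intro u u' r hu hu' hbc
  have hucont : ∀ j, Continuous (u j) := fun j =>
    continuous_iff_continuousAt.mpr fun x => (hu j x).continuousAt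
  -- nonnegativity of the two integral sums
  have hAterm : ∀ j : Fin m, (0:ℝ) ≤ ∫ x in (0:ℝ)..1, μ j * c j x * u' j x * u' j x := by
    intro j
    apply intervalIntegral.integral_nonneg (by norm_num)
    intro x _
    have : μ j * c j x * u' j x * u' j x = (μ j * c j x) * (u' j x * u' j x) := by ring
    rw [this]
    exact mul_nonneg (mul_nonneg (hμ j).le (hcpos j x).le) (mul_self_nonneg _)
  have hBterm : ∀ j : Fin m, (0:ℝ) ≤ ∫ x in (0:ℝ)..1, μ j * p j x * u j x * u j x := by
    intro j
    apply intervalIntegral.integral_nonneg (by norm_num)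
    intro x _
    have : μ j * p j x * u j x * u j x = (μ j * p j x) * (u j x * u j x) := by ring
    rw [this]
    exact mul_nonneg (mul_nonneg (hμ j).le (hppos j x)) (mul_self_nonneg _)
  have hA : (0:ℝ) ≤ ∑ j, ∫ x in (0:ℝ)..1, μ j * c j x * u' j x * u' j x :=
    Finset.sum_nonneg fun j _ => hAterm j
  have hB : (0:ℝ) ≤ ∑ j, ∫ x in (0:ℝ)..1, μ j * p j x * u j x * u j x :=
    Finset.sum_nonneg fun j _ => hBterm j
  obtain ⟨hQle, hQeq⟩ := quad_nonpos M hMsym hMoff hMrow r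
  refine ⟨?_, ?_, ?_⟩
  · -- symmetry
    intro g g' q hg hg' hgbc
    unfold netForm
    congr 1
    · congr 1
      · refine Finset.sum_congr rfl fun j _ => ?_
        refine intervalIntegral.integral_congr fun x _ => ?_
        ring
      · refine Finset.sum_congr rfl fun j _ => ?_
        refine intervalIntegral.integral_congr fun x _ => ?_
        ring
    · simp_rw [Finset.sum_mul]
      rw [Finset.sum_comm]
      refine Finset.sum_congr rfl fun i _ => Finset.sum_congr rfl fun l _ => ?_
      have hsy : M l i = M i l := by
        have := hMsym; rw [Matrix.IsSymm] at this
        calc M l i = M.transpose i l := rfl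
          _ = M i l := by rw [this]
      rw [hsy]; ring
  · -- accretivity
    unfold netForm
    linarith
  · -- equality case
    intro h0
    unfold netForm at h0
    have hAzero : ∑ j, ∫ x in (0:ℝ)..1, μ j * c j x * u' j x * u' j x = 0 := by linarith
    have hQzero : ∑ i, (∑ l, M i l * r l) * r i = 0 := by linarith
    have hr : r = 0 := hQeq hQzero
    refine ⟨?_, hr⟩
    intro j x hx
    -- each integral in the first sum vanishes
    have hjzero : ∫ t in (0:ℝ)..1, μ j * c j t * u' j t * u' j t = 0 :=
      (Finset.sum_eq_zero_iff_of_nonneg fun j _ => hAterm j).mp hAzero j (Finset.mem_univ j)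
    have hcont : Continuous fun t => μ j * c j t * u' j t * u' j t := by
      continuity
    have hnn : ∀ t, 0 ≤ μ j * c j t * u' j t * u' j t := by
      intro t
      have : μ j * c j t * u' j t * u' j t = (μ j * c j t) * (u' j t * u' j t) := by ring
      rw [this]
      exact mul_nonneg (mul_nonneg (hμ j).le (hcpos j t).le) (mul_self_nonneg _)
    have hvanish := cont_nonneg_int_zero _ hcont hnn hjzero
    have hderiv0 : ∀ t ∈ Set.Icc (0:ℝ) 1, u' j t = 0 := by
      intro t ht
      have h := hvanish t ht
      have hpos : 0 < μ j * c j t := mul_pos (hμ j) (hcpos j t)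
      have : (μ j * c j t) * (u' j t * u' j t) = 0 := by linarith [h]
      have h2 : u' j t * u' j t = 0 := by
        rcases mul_eq_zero.mp this with h' | h'
        · exact absurd h' hpos.ne'
        · exact h'
      exact mul_self_eq_zero.mp h2
    -- FTC: u j x = u j 0 = r (e0 j) = 0
    have hftc : ∫ t in (0:ℝ)..x, u' j t = u j x - u j 0 :=
      intervalIntegral.integral_eq_sub_of_hasDerivAt (fun t _ => hu j t)
        ((hu' j).intervalIntegrable 0 x)
    have hint0 : ∫ t in (0:ℝ)..x, u' j t = 0 := by
      rw [intervalIntegral.integral_congr (g := fun _ => (0:ℝ)) ?_]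
      · simp
      · intro t ht
        apply hderiv0
        have : Set.uIcc (0:ℝ) x ⊆ Set.Icc (0:ℝ) 1 := by
          rw [Set.uIcc_of_le hx.1]
          exact Set.Icc_subset_Icc le_rfl hx.2
        exact this ht
    have hbc0 : u j 0 = 0 := by
      rw [(hbc j).1, hr]; rfl
    have := hint0 ▸ hftc
    linarith [hbc0 ▸ this]
end
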